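/- arXiv:2105.00193 — 4 statements merged into one kernel-verified Lean document; each statement's English description precedes it below -/
import Mathlib

section
/- Consider the tournament on vertices x_1, …, x_n (n ≥ 3) in which x_i dominates x_j if and only if i − j ≥ 2 or j − i = 1. Then x_1 can reach every other vertex by a directed path, but there is no directed path from x_1 to x_n of length at most n − 2. -/
/-- There is a directed path of length `k` from `u` to `v`. -/
def HasPathLen {V : Type*} (dom : V → V → Prop) (u v : V) (k : ℕ) : Prop :=
  ∃ f : ℕ → V, f 0 = u ∧ f k = v ∧ ∀ i < k, dom (f i) (f (i + 1))

/-- In the tournament on `x_1, …, x_n` (`n ≥ 3`, zero-indexed here as `Fin n`) where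
`x_i ≻ x_j` iff `i - j ≥ 2` or `j - i = 1`, vertex `x_1` can reach every other vertex,
but cannot reach `x_n` via a path of length at most `n - 2`. -/
theorem stmt5 (n : ℕ) (hn : 3 ≤ n)
    (dom : Fin n → Fin n → Prop)
    (hdom : ∀ i j : Fin n, dom i j ↔ (j.val + 2 ≤ i.val ∨ i.val + 1 = j.val)) :
    (∀ v : Fin n, v ≠ ⟨0, by omega⟩ → ∃ m : ℕ, HasPathLen dom ⟨0, by omega⟩ v m) ∧
    ¬ (∃ m ≤ n - 2, HasPathLen dom ⟨0, by omega⟩ ⟨n - 1, by omega⟩ m) := by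
  constructor
  · intro v hv
    refine ⟨v.val, fun i => ⟨min i v.val, by omega⟩, ?_, ?_, ?_⟩
    · simp
    · ext; simp
    · intro i hi
      rw [hdom]
      right
      simp
      omega
  · rintro ⟨m, hm, f, h0, hk, hstep⟩
    have key : ∀ i ≤ m, (f i).val ≤ i := by
      intro i hi
      induction i with
      | zero => simp [h0]
      | succ j ih =>
        have := hstep j (by omega)
        rw [hdom] at this
        have hj := ih (by omega)
        omega
    have := key m le_rfl
    rw [hk] at this
    simp at this
    omega
end

section
/- Let S be a finite set of size t, and pick a subset S₁ of S uniformly at random among all 2^t subsets, with S₂ = S \ S₁. Fix a tournament structure on S and let z_1, …, z_t be the elements of S in nondecreasing order of outdegree within S. Then the probability that S₁ ≻ S₂ (every element of S₁ dominates every element of S₂) is at most (t+1)/2^t. -/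
/-- Pick `S₁ ⊆ S` uniformly at random among all `2^t` subsets (`t = |S|`), and set
`S₂ = S \ S₁`. The probability that `S₁ ≻ S₂` is at most `(t+1)/2^t`.
Formalized by counting: the number of subsets `S₁` of `S` with `S₁ ≻ S \ S₁`, divided by
`2^t`, is at most `(t+1)/2^t`. -/
theorem stmt9 {V : Type*} [DecidableEq V]
    (dom : V → V → Prop) [DecidableRel dom]
    (hasym : ∀ x y, dom x y → ¬ dom y x)
    (htotal : ∀ x y, x ≠ y → dom x y ∨ dom y x)
    (S : Finset V) :
    (((S.powerset.filter (fun S1 => ∀ a ∈ S1, ∀ b ∈ S \ S1, dom a b)).card : ℝ))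
        / 2 ^ S.card
      ≤ ((S.card : ℝ) + 1) / 2 ^ S.card := by
  set F := S.powerset.filter (fun S1 => ∀ a ∈ S1, ∀ b ∈ S \ S1, dom a b) with hF
  have chain : ∀ A ∈ F, ∀ B ∈ F, A ⊆ B ∨ B ⊆ A := by
    intro A hA B hB
    simp only [hF, Finset.mem_filter, Finset.mem_powerset] at hA hB
    by_contra h
    push_neg at h
    obtain ⟨hAB, hBA⟩ := h
    obtain ⟨a, haA, haB⟩ := Finset.not_subset.mp hAB
    obtain ⟨b, hbB, hbA⟩ := Finset.not_subset.mp hBA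
    have h1 : dom a b := hA.2 a haA b (Finset.mem_sdiff.mpr ⟨hB.1 hbB, hbA⟩)
    have h2 : dom b a := hB.2 b hbB a (Finset.mem_sdiff.mpr ⟨hA.1 haA, haB⟩)
    exact hasym a b h1 h2
  have hcard : F.card ≤ S.card + 1 := by
    have hinj : Set.InjOn (fun A : Finset V => A.card) F := by
      intro A hA B hB hab
      rcases chain A hA B hB with h | h
      · exact Finset.eq_of_subset_of_card_le h (le_of_eq hab.symm)
      · exact (Finset.eq_of_subset_of_card_le h (le_of_eq hab)).symm
    have hmaps : ∀ A ∈ F, A.card ∈ Finset.range (S.card + 1) := by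
      intro A hA
      simp only [hF, Finset.mem_filter, Finset.mem_powerset] at hA
      exact Finset.mem_range.mpr (Nat.lt_succ_of_le (Finset.card_le_card hA.1))
    calc F.card ≤ (Finset.range (S.card + 1)).card :=
          Finset.card_le_card_of_injOn _ hmaps hinj
      _ = S.card + 1 := Finset.card_range _
  apply div_le_div_of_nonneg_right ?_ (by positivity)
  exact_mod_cast hcard
end

section
/- Let T be a tournament and suppose D and D_inv are sets of vertices, x is a vertex, and the following hold: (E1) for every vertex m ∉ D there exists i ∈ D with i dominating m; (E2) for every vertex ℓ ∉ D_inv there exists j ∈ D_inv with ℓ dominating j; (E3) for every i ∈ D and j ∈ D_inv there is a directed path from j to i of length at most 3. Then every vertex of T is a 5-king. -/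
lemma HasPathLen.refl {V : Type*} (dom : V → V → Prop) (u : V) : HasPathLen dom u u 0 :=
  ⟨fun _ => u, rfl, rfl, by omega⟩

lemma HasPathLen.single {V : Type*} {dom : V → V → Prop} {u v : V} (h : dom u v) :
    HasPathLen dom u v 1 := by
  refine ⟨fun k => if k = 0 then u else v, rfl, rfl, ?_⟩
  intro i hi
  interval_cases i
  simpa using h

lemma HasPathLen.trans {V : Type*} {dom : V → V → Prop} {a b c : V} {m n : ℕ}
    (h1 : HasPathLen dom a b m) (h2 : HasPathLen dom b c n) :
    HasPathLen dom a c (m + n) := by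
  obtain ⟨f, hf0, hfm, hf⟩ := h1
  obtain ⟨g, hg0, hgn, hg⟩ := h2
  refine ⟨fun k => if k ≤ m then f k else g (k - m), by simp [hf0], ?_, ?_⟩
  · by_cases hn : n = 0
    · subst hn; simpa [hfm, ← hg0] using hgn
    · have : ¬ (m + n ≤ m) := by omega
      simp only [this, if_false]
      have : m + n - m = n := by omega
      rw [this, hgn]
  · intro i hi
    by_cases h1 : i + 1 ≤ m
    · have : i ≤ m := by omega
      simp only [this, h1, if_true]
      exact hf i (by omega)
    · by_cases h2 : i ≤ m
      · have him : i = m := by omega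
        simp only [h2, if_true, h1, if_false]
        have : i + 1 - m = 1 := by omega
        rw [this, him, hfm, ← hg0]
        exact hg 0 (by omega)
      · simp only [h2, if_false, h1, if_false]
        have : i + 1 - m = (i - m) + 1 := by omega
        rw [this]
        exact hg (i - m) (by omega)

/-- If (E1) every vertex outside `D` is dominated by some vertex of `D`, (E2) every vertex
outside `D_inv` dominates some vertex of `D_inv`, and (E3) from every `j ∈ D_inv` to every
`i ∈ D` there is a path of length at most 3, then every vertex is a 5-king. -/
theorem stmt12 {V : Type*}
    (dom : V → V → Prop)
    (hasym : ∀ x y, dom x y → ¬ dom y x)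
    (htotal : ∀ x y, x ≠ y → dom x y ∨ dom y x)
    (D Dinv : Set V)
    (hE1 : ∀ m : V, m ∉ D → ∃ i ∈ D, dom i m)
    (hE2 : ∀ l : V, l ∉ Dinv → ∃ j ∈ Dinv, dom l j)
    (hE3 : ∀ i ∈ D, ∀ j ∈ Dinv, ∃ m ≤ 3, HasPathLen dom j i m) :
    ∀ u v : V, u ≠ v → ∃ m ≤ 5, HasPathLen dom u v m := by
  intro u v _
  -- step 1: from u reach some j ∈ Dinv in ≤ 1 step
  obtain ⟨j, hj, a, ha, hpa⟩ : ∃ j ∈ Dinv, ∃ a ≤ 1, HasPathLen dom u j a := by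
    by_cases hu : u ∈ Dinv
    · exact ⟨u, hu, 0, by omega, HasPathLen.refl dom u⟩
    · obtain ⟨j, hj, hd⟩ := hE2 u hu
      exact ⟨j, hj, 1, le_refl 1, HasPathLen.single hd⟩
  -- step 3: reach v from some i ∈ D in ≤ 1 step
  obtain ⟨i, hi, b, hb, hpb⟩ : ∃ i ∈ D, ∃ b ≤ 1, HasPathLen dom i v b := by
    by_cases hv : v ∈ D
    · exact ⟨v, hv, 0, by omega, HasPathLen.refl dom v⟩
    · obtain ⟨i, hi, hd⟩ := hE1 v hv
      exact ⟨i, hi, 1, le_refl 1, HasPathLen.single hd⟩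
  -- step 2: path from j to i of length ≤ 3
  obtain ⟨c, hc, hpc⟩ := hE3 i hi j hj
  exact ⟨a + c + b, by omega, (hpa.trans hpc).trans hpb⟩
end

section
/- Let n = 2^r and let T be a tournament on n vertices with a distinguished vertex x. Suppose there exist distinct vertices y_1, …, y_r, all dominated by x, and a partition of V \ {x} into sets V_1, …, V_r with |V_i| = 2^{i-1}, y_i ∈ V_i, and y_i a single-elimination winner of the tournament restricted to V_i for every i. Then x is a single-elimination winner of T. -/
/-- `IsSEWinner dom k W x`: `x` wins a balanced single-elimination tournament (of `k` rounds)
under some bracket on the vertex set `W` (which should have size `2^k`), where match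
outcomes are given by the dominance relation `dom`. -/
def IsSEWinner {V : Type*} [DecidableEq V] (dom : V → V → Prop) :
    ℕ → Finset V → V → Prop
  | 0, W, x => W = {x}
  | (k + 1), W, x => ∃ A B : Finset V, A ∪ B = W ∧ Disjoint A B ∧
      A.card = 2 ^ k ∧ B.card = 2 ^ k ∧
      IsSEWinner dom k A x ∧ ∃ y, IsSEWinner dom k B y ∧ dom x y

/-- Let `n = 2^r`, and suppose `x` dominates distinct vertices `y_1, …, y_r` and
`V \ {x}` is partitioned into sets `V_1, …, V_r` with `|V_i| = 2^{i-1}`, `y_i ∈ V_i`, and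
`y_i` a single-elimination winner of the restriction to `V_i`. Then `x` is a
single-elimination winner of the whole tournament. (Zero-indexed: `Vs i` has size `2^i`.) -/
theorem stmt15 {V : Type*} [Fintype V] [DecidableEq V]
    (dom : V → V → Prop) [DecidableRel dom]
    (hasym : ∀ x y, dom x y → ¬ dom y x)
    (htotal : ∀ x y, x ≠ y → dom x y ∨ dom y x)
    (r : ℕ) (hcard : Fintype.card V = 2 ^ r)
    (x : V) (y : Fin r → V) (hyinj : Function.Injective y)
    (hdomy : ∀ i, dom x (y i))
    (Vs : Fin r → Finset V)
    (hnotx : ∀ i, x ∉ Vs i)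
    (hpart : ∀ v : V, v ≠ x → ∃! i : Fin r, v ∈ Vs i)
    (hcardVs : ∀ i : Fin r, (Vs i).card = 2 ^ (i : ℕ))
    (hyi : ∀ i, y i ∈ Vs i)
    (hwin : ∀ i : Fin r, IsSEWinner dom (i : ℕ) (Vs i) (y i)) :
    IsSEWinner dom r Finset.univ x := by
  classical
  have hdisj : ∀ i j : Fin r, i ≠ j → Disjoint (Vs i) (Vs j) := by
    intro i j hij
    rw [Finset.disjoint_left]
    intro v hvi hvj
    have hvx : v ≠ x := fun h => hnotx i (h ▸ hvi)
    obtain ⟨k, _, huniq⟩ := hpart v hvx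
    exact hij ((huniq i hvi).trans (huniq j hvj).symm)
  set W : ℕ → Finset V := fun k =>
    insert x ((Finset.univ.filter (fun i : Fin r => (i : ℕ) < k)).biUnion Vs) with hW
  have key : ∀ k, k ≤ r → (W k).card = 2 ^ k ∧ IsSEWinner dom k (W k) x := by
    intro k
    induction k with
    | zero =>
      intro _
      have : W 0 = {x} := by
        simp [hW]
      rw [this]
      exact ⟨by simp, rfl⟩
    | succ k ih =>
      intro hk1
      obtain ⟨ihcard, ihwin⟩ := ih (Nat.le_of_succ_le hk1)
      set j : Fin r := ⟨k, hk1⟩ with hj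
      have hjk : (j : ℕ) = k := rfl
      have hWsucc : W (k + 1) = W k ∪ Vs j := by
        ext v
        simp only [hW, Finset.mem_insert, Finset.mem_union, Finset.mem_biUnion,
          Finset.mem_filter, Finset.mem_univ, true_and, Nat.lt_succ_iff_lt_or_eq]
        constructor
        · rintro (rfl | ⟨i, (hi | hi), hvi⟩)
          · exact Or.inl (Or.inl rfl)
          · exact Or.inl (Or.inr ⟨i, hi, hvi⟩)
          · refine Or.inr ?_
            have : i = j := Fin.ext hi
            exact this ▸ hvi
        · rintro ((rfl | ⟨i, hi, hvi⟩) | hv)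
          · exact Or.inl rfl
          · exact Or.inr ⟨i, Or.inl hi, hvi⟩
          · exact Or.inr ⟨j, Or.inr hjk, hv⟩
      have hdisjWk : Disjoint (W k) (Vs j) := by
        rw [Finset.disjoint_left]
        intro v hv hvj
        simp only [hW, Finset.mem_insert, Finset.mem_biUnion, Finset.mem_filter,
          Finset.mem_univ, true_and] at hv
        rcases hv with rfl | ⟨i, hi, hvi⟩
        · exact hnotx j hvj
        · have hij : i ≠ j := by
            intro h; rw [h, hjk] at hi; exact lt_irrefl k hi
          exact (Finset.disjoint_left.mp (hdisj i j hij)) hvi hvj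
      have hcardW : (W (k + 1)).card = 2 ^ (k + 1) := by
        rw [hWsucc, Finset.card_union_of_disjoint hdisjWk, ihcard, hcardVs j, hjk]
        ring
      refine ⟨hcardW, ?_⟩
      refine ⟨W k, Vs j, hWsucc.symm, hdisjWk, ihcard, by rw [hcardVs j, hjk],
        ihwin, y j, ?_, hdomy j⟩
      have := hwin j
      rwa [hjk] at this
  have hWr : W r = Finset.univ := by
    ext v
    simp only [hW, Finset.mem_insert, Finset.mem_biUnion, Finset.mem_filter,
      Finset.mem_univ, true_and, iff_true]
    by_cases hvx : v = x
    · exact Or.inl hvx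
    · obtain ⟨i, hi, _⟩ := hpart v hvx
      exact Or.inr ⟨i, i.isLt, hi⟩
  have := (key r le_rfl).2
  rwa [hWr] at this
end
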